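/- Let □ be a lattice polygon in ℝ² with lattice width q (attained in the vertical direction, i.e. the height of □ is q) and horizontal width q' ≥ q. Suppose □ satisfies d(□,(1,1)) ≥ q' and d(□,(1,-1)) ≥ q'. If □ is a quadrilateral whose four vertices lie respectively on the four supporting lines in directions (0,±1) and (±1,0), then the normalized area 2·Area(□) ≥ (3/4)q². -/

import Mathlib

open MeasureTheory

/-- The width of a planar set `K` in the integer direction `v`. -/
noncomputable def dirWidth (K : Set (ℝ × ℝ)) (v : ℤ × ℤ) : ℝ :=
  sSup ((fun p : ℝ × ℝ => v.1 * p.1 + v.2 * p.2) '' K) -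
    sInf ((fun p : ℝ × ℝ => v.1 * p.1 + v.2 * p.2) '' K)

/-- A primitive integer vector. -/
def IsPrimitiveVec (v : ℤ × ℤ) : Prop := Int.gcd v.1 v.2 = 1

section Aux
open MeasureTheory Set

lemma key_arith (q q' A B C D : ℝ) (hA0 : 0 ≤ A) (hA : A ≤ q') (hB0 : 0 ≤ B) (hB : B ≤ q')
    (hC0 : 0 ≤ C) (hC : C ≤ q) (hD0 : 0 ≤ D) (hD : D ≤ q) (hqq : q ≤ q')
    (h1 : q' ≤ max (max (A+q) B) (max (q'+C) D) - min (min (A+q) B) (min (q'+C) D))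
    (h2 : q' ≤ max (max (A-q) B) (max (q'-C) (-D)) - min (min (A-q) B) (min (q'-C) (-D))) :
    (B - A) * (D - C) ≤ q^2/4 := by
  have hq0 : 0 ≤ q := le_trans hC0 hC
  rcases le_total B A with hBA | hBA <;> rcases le_total D C with hDC | hDC
  · -- B ≤ A, D ≤ C : use h2
    have e1 : max (max (A-q) B) (max (q'-C) (-D)) ≤ max B (q'-C) :=
      max_le (max_le ((show A-q ≤ q'-C by linarith).trans (le_max_right _ _)) (le_max_left _ _))
        (max_le (le_max_right _ _) ((show (-D:ℝ) ≤ B by linarith).trans (le_max_left _ _)))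
    have e2 : min (A-q) (-D) ≤ min (min (A-q) B) (min (q'-C) (-D)) :=
      le_min (le_min (min_le_left _ _) ((min_le_right (A-q) (-D)).trans (by linarith)))
        (le_min ((min_le_left (A-q) (-D)).trans (by linarith)) (min_le_right _ _))
    have h2' : q' ≤ max B (q'-C) - min (A-q) (-D) := by linarith
    have hkey : (B - A) * (D - C) = (A - B) * (C - D) := by ring
    rw [hkey]
    rcases le_total B (q'-C) with h | h <;> rcases le_total (A-q) (-D) with h' | h'
    · rw [max_eq_right h, min_eq_left h'] at h2'
      nlinarith [mul_le_mul (show A - B ≤ q - C by linarith) (show C - D ≤ C by linarith)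
        (by linarith : (0:ℝ) ≤ C - D) (by linarith : (0:ℝ) ≤ q - C), sq_nonneg (q - 2*C)]
    · rw [max_eq_right h, min_eq_right h'] at h2'
      nlinarith [mul_nonneg (sub_nonneg.2 hBA) (show (0:ℝ) ≤ D - C by linarith)]
    · rw [max_eq_left h, min_eq_left h'] at h2'
      nlinarith [mul_nonneg (show (0:ℝ) ≤ B - A by linarith) (sub_nonneg.2 hDC)]
    · rw [max_eq_left h, min_eq_right h'] at h2'
      nlinarith [mul_le_mul (show A - B ≤ D by linarith) (show C - D ≤ q - D by linarith)
        (by linarith : (0:ℝ) ≤ C - D) hD0, sq_nonneg (q - 2*D)]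
  · nlinarith [mul_nonneg (sub_nonneg.2 hBA) (sub_nonneg.2 hDC)]
  · nlinarith [mul_nonneg (sub_nonneg.2 hBA) (sub_nonneg.2 hDC)]
  · -- A ≤ B, C ≤ D : use h1
    have e1 : max (max (A+q) B) (max (q'+C) D) ≤ max (A+q) (q'+C) :=
      max_le (max_le (le_max_left _ _) ((show B ≤ q'+C by linarith).trans (le_max_right _ _)))
        (max_le (le_max_right _ _) ((show D ≤ A+q by linarith).trans (le_max_left _ _)))
    have e2 : min B D ≤ min (min (A+q) B) (min (q'+C) D) :=
      le_min (le_min ((min_le_right B D).trans (by linarith)) (min_le_left _ _))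
        (le_min ((min_le_left B D).trans (by linarith)) (min_le_right _ _))
    have h1' : q' ≤ max (A+q) (q'+C) - min B D := by linarith
    rcases le_total (A+q) (q'+C) with h | h <;> rcases le_total B D with h' | h'
    · rw [max_eq_right h, min_eq_left h'] at h1'
      nlinarith [mul_le_mul (show B - A ≤ C by linarith) (show D - C ≤ q - C by linarith)
        (by linarith : (0:ℝ) ≤ D - C) (by linarith : (0:ℝ) ≤ C), sq_nonneg (q - 2*C)]
    · rw [max_eq_right h, min_eq_right h'] at h1'
      nlinarith [mul_nonneg (sub_nonneg.2 hBA) (show (0:ℝ) ≤ C - D by linarith)]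
    · rw [max_eq_left h, min_eq_left h'] at h1'
      nlinarith [mul_nonneg (show (0:ℝ) ≤ A - B by linarith) (sub_nonneg.2 hDC)]
    · rw [max_eq_left h, min_eq_right h'] at h1'
      nlinarith [mul_le_mul (show B - A ≤ q - D by linarith) (show D - C ≤ D by linarith)
        (by linarith : (0:ℝ) ≤ D - C) (by linarith : (0:ℝ) ≤ q - D), sq_nonneg (q - 2*D)]



lemma tri0_vol :
    ENNReal.ofReal (1/2) ≤ volume (convexHull ℝ {((0:ℝ),(0:ℝ)), ((1:ℝ),(0:ℝ)), ((0:ℝ),(1:ℝ))}) := by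
  set T : Set (ℝ × ℝ) := convexHull ℝ {((0:ℝ),(0:ℝ)), ((1:ℝ),(0:ℝ)), ((0:ℝ),(1:ℝ))} with hT
  have hsub : regionBetween (fun _ : ℝ => (0:ℝ)) (fun x => 1 - x) (Ioo 0 1) ⊆ T := by
    rintro ⟨x, y⟩ ⟨hx, hy⟩
    simp only [mem_Ioo] at hx hy
    have hconv : Convex ℝ T := convex_convexHull ℝ _
    have hy1 : y < 1 - x := hy.2
    have hx0 : 0 < x := hx.1
    have hy0 : 0 < y := hy.1
    have h1y : 0 < 1 - y := by linarith
    have hA : ((0:ℝ),(0:ℝ)) ∈ T := subset_convexHull ℝ _ (by simp)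
    have hB : ((1:ℝ),(0:ℝ)) ∈ T := subset_convexHull ℝ _ (by simp)
    have hC : ((0:ℝ),(1:ℝ)) ∈ T := subset_convexHull ℝ _ (by simp)
    have hm : (x / (1-y)) • ((1:ℝ),(0:ℝ)) + (1 - x/(1-y)) • ((0:ℝ),(0:ℝ)) ∈ T :=
      hconv hB hA (by positivity) (by rw [sub_nonneg, div_le_one h1y]; linarith) (by ring)
    have hmem := hconv hm hC (by linarith : (0:ℝ) ≤ 1 - y) hy0.le (by ring)
    have heq : (1-y) • ((x / (1-y)) • ((1:ℝ),(0:ℝ)) + (1 - x/(1-y)) • ((0:ℝ),(0:ℝ))) + y • ((0:ℝ),(1:ℝ))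
        = ((x:ℝ), (y:ℝ)) := by
      simp only [Prod.smul_mk, Prod.mk_add_mk, smul_eq_mul, Prod.mk.injEq]
      constructor <;> field_simp <;> ring
    rwa [heq] at hmem
  calc ENNReal.ofReal (1/2)
      = volume (regionBetween (fun _ : ℝ => (0:ℝ)) (fun x => 1 - x) (Ioo 0 1)) := by
        rw [Measure.volume_eq_prod, volume_regionBetween_eq_integral]
        · congr 1
          simp only [Pi.sub_apply, sub_zero]
          rw [← integral_Ioc_eq_integral_Ioo, ← intervalIntegral.integral_of_le (by norm_num : (0:ℝ) ≤ 1)]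
          rw [intervalIntegral.integral_sub intervalIntegrable_const intervalIntegral.intervalIntegrable_id]
          simp [integral_id]
          norm_num
        · exact integrableOn_const (by simp)
        · exact (Continuous.integrableOn_Ioc (by continuity)).mono_set Ioo_subset_Ioc_self
        · exact measurableSet_Ioo
        · intro x hx; simp only [mem_Ioo] at hx; linarith [hx.2]
    _ ≤ volume T := measure_mono hsub

instance : (volume : Measure (ℝ × ℝ)).IsAddHaarMeasure := by
  rw [Measure.volume_eq_prod]; infer_instance

instance : (volume : Measure (ℝ × ℝ)).IsAddLeftInvariant := by
  rw [Measure.volume_eq_prod]; infer_instance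


lemma line_null (a b c : ℝ) (h : ¬ (a = 0 ∧ b = 0)) :
    volume {p : ℝ × ℝ | a * p.1 + b * p.2 = c} = 0 := by
  set L : ℝ × ℝ →ₗ[ℝ] ℝ := a • LinearMap.fst ℝ ℝ ℝ + b • LinearMap.snd ℝ ℝ ℝ with hL
  have hLapp : ∀ p : ℝ × ℝ, L p = a * p.1 + b * p.2 := by
    intro p; simp [hL, smul_eq_mul]
  obtain ⟨p₀, hp₀⟩ : ∃ p₀ : ℝ × ℝ, L p₀ = c := by
    rcases not_and_or.1 h with ha | hb
    · exact ⟨(c / a, 0), by rw [hLapp]; field_simp <;> ring⟩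
    · exact ⟨(0, c / b), by rw [hLapp]; field_simp <;> ring⟩
  have hker : LinearMap.ker L ≠ ⊤ := by
    intro htop
    rcases not_and_or.1 h with ha | hb
    · have : (1, 0) ∈ LinearMap.ker L := htop ▸ Submodule.mem_top
      rw [LinearMap.mem_ker, hLapp] at this; simp at this; exact ha this
    · have : (0, 1) ∈ LinearMap.ker L := htop ▸ Submodule.mem_top
      rw [LinearMap.mem_ker, hLapp] at this; simp at this; exact hb this
  have hp₀' : a * p₀.1 + b * p₀.2 = c := by rw [← hLapp]; exact hp₀
  have hset : {p : ℝ × ℝ | a * p.1 + b * p.2 = c} = (fun x => -p₀ + x) ⁻¹' (LinearMap.ker L) := by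
    ext z
    simp only [mem_setOf_eq, mem_preimage, SetLike.mem_coe, LinearMap.mem_ker, hLapp,
      Prod.fst_add, Prod.snd_add, Prod.fst_neg, Prod.snd_neg]
    constructor <;> intro hz <;> linarith
  rw [hset, measure_preimage_add]
  exact Measure.addHaar_submodule volume _ hker

lemma tri_vol (p q r : ℝ × ℝ) :
    ENNReal.ofReal (((q.1-p.1)*(r.2-p.2) - (r.1-p.1)*(q.2-p.2))/2)
      ≤ volume (convexHull ℝ {p, q, r}) := by
  set M : ℝ × ℝ →ₗ[ℝ] ℝ × ℝ :=
    Matrix.toLin (Module.Basis.finTwoProd ℝ) (Module.Basis.finTwoProd ℝ)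
      !![q.1-p.1, r.1-p.1; q.2-p.2, r.2-p.2] with hM
  have hdet : LinearMap.det M = (q.1-p.1)*(r.2-p.2) - (r.1-p.1)*(q.2-p.2) := by
    rw [hM, LinearMap.det_toLin, Matrix.det_fin_two]
    simp
  have hM1 : M ((1:ℝ),(0:ℝ)) = (q.1-p.1, q.2-p.2) := by
    have : ((1:ℝ),(0:ℝ)) = Module.Basis.finTwoProd ℝ 0 := by simp [Module.Basis.finTwoProd_zero]
    rw [this, hM, Matrix.toLin_self]
    simp [Fin.sum_univ_two, Module.Basis.finTwoProd_zero, Module.Basis.finTwoProd_one, Prod.smul_mk]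
  have hM2 : M ((0:ℝ),(1:ℝ)) = (r.1-p.1, r.2-p.2) := by
    have : ((0:ℝ),(1:ℝ)) = Module.Basis.finTwoProd ℝ 1 := by simp [Module.Basis.finTwoProd_one]
    rw [this, hM, Matrix.toLin_self]
    simp [Fin.sum_univ_two, Module.Basis.finTwoProd_zero, Module.Basis.finTwoProd_one, Prod.smul_mk]
  have himg : convexHull ℝ {p, q, r}
      = (fun x => p + x) '' (M '' (convexHull ℝ {((0:ℝ),(0:ℝ)), ((1:ℝ),(0:ℝ)), ((0:ℝ),(1:ℝ))})) := by
    have hM0 : M ((0:ℝ),(0:ℝ)) = ((0:ℝ),(0:ℝ)) := map_zero M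
    rw [M.image_convexHull, image_insert_eq, image_insert_eq, image_singleton, hM0, hM1, hM2]
    have htr : (fun x => p + x) '' (convexHull ℝ {((0:ℝ),(0:ℝ)), (q.1-p.1, q.2-p.2), (r.1-p.1, r.2-p.2)})
        = convexHull ℝ ((fun x => p + x) '' {((0:ℝ),(0:ℝ)), (q.1-p.1, q.2-p.2), (r.1-p.1, r.2-p.2)}) := by
      rw [← Set.singleton_add, ← Set.singleton_add, convexHull_add, convexHull_singleton]
    rw [htr, image_insert_eq, image_insert_eq, image_singleton]
    have e0 : p + ((0:ℝ),(0:ℝ)) = p := by rw [Prod.ext_iff]; simp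
    have e1 : p + (q.1 - p.1, q.2 - p.2) = q := by rw [Prod.ext_iff]; simp
    have e2 : p + (r.1 - p.1, r.2 - p.2) = r := by rw [Prod.ext_iff]; simp
    rw [e0, e1, e2]
  have htrans : volume ((fun x => p + x) '' (⇑M '' (convexHull ℝ {((0:ℝ),(0:ℝ)), ((1:ℝ),(0:ℝ)), ((0:ℝ),(1:ℝ))})))
      = volume (⇑M '' (convexHull ℝ {((0:ℝ),(0:ℝ)), ((1:ℝ),(0:ℝ)), ((0:ℝ),(1:ℝ))})) := by
    rw [Set.image_add_left, measure_preimage_add]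
  calc ENNReal.ofReal (((q.1-p.1)*(r.2-p.2) - (r.1-p.1)*(q.2-p.2))/2)
      ≤ ENNReal.ofReal (|LinearMap.det M|/2) := by
        apply ENNReal.ofReal_le_ofReal
        rw [hdet]
        have := le_abs_self ((q.1-p.1)*(r.2-p.2) - (r.1-p.1)*(q.2-p.2))
        linarith
    _ = ENNReal.ofReal |LinearMap.det M| * ENNReal.ofReal (1/2) := by
        rw [← ENNReal.ofReal_mul (abs_nonneg _), mul_one_div]
    _ ≤ ENNReal.ofReal |LinearMap.det M|
          * volume (convexHull ℝ {((0:ℝ),(0:ℝ)), ((1:ℝ),(0:ℝ)), ((0:ℝ),(1:ℝ))}) :=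
        mul_le_mul_right tri0_vol _
    _ = volume (⇑M '' (convexHull ℝ {((0:ℝ),(0:ℝ)), ((1:ℝ),(0:ℝ)), ((0:ℝ),(1:ℝ))})) :=
        (Measure.addHaar_image_linearMap volume M _).symm
    _ = volume (convexHull ℝ {p, q, r}) := by rw [himg, htrans]

lemma quad_vol (v₁ v₂ v₃ v₄ : ℝ × ℝ) :
    ENNReal.ofReal (((v₃.1-v₄.1)*(v₁.2-v₄.2) - (v₁.1-v₄.1)*(v₃.2-v₄.2))/2)
      + ENNReal.ofReal (((v₂.1-v₄.1)*(v₃.2-v₄.2) - (v₃.1-v₄.1)*(v₂.2-v₄.2))/2)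
      ≤ volume (convexHull ℝ {v₁, v₂, v₃, v₄}) := by
  set S₁ : ℝ := (v₃.1-v₄.1)*(v₁.2-v₄.2) - (v₁.1-v₄.1)*(v₃.2-v₄.2) with hS₁
  set S₂ : ℝ := (v₂.1-v₄.1)*(v₃.2-v₄.2) - (v₃.1-v₄.1)*(v₂.2-v₄.2) with hS₂
  set K : Set (ℝ × ℝ) := convexHull ℝ {v₁, v₂, v₃, v₄} with hK
  have hT₁K : convexHull ℝ {v₄, v₃, v₁} ⊆ K :=
    convexHull_mono (by intro x hx; simp only [mem_insert_iff, mem_singleton_iff] at hx ⊢; tauto)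
  have hT₂K : convexHull ℝ {v₄, v₂, v₃} ⊆ K :=
    convexHull_mono (by intro x hx; simp only [mem_insert_iff, mem_singleton_iff] at hx ⊢; tauto)
  have h₁ : ENNReal.ofReal (S₁/2) ≤ volume (convexHull ℝ {v₄, v₃, v₁}) := tri_vol v₄ v₃ v₁
  have h₂ : ENNReal.ofReal (S₂/2) ≤ volume (convexHull ℝ {v₄, v₂, v₃}) := tri_vol v₄ v₂ v₃
  rcases le_or_gt S₁ 0 with hs₁ | hs₁
  · rw [ENNReal.ofReal_of_nonpos (show S₁/2 ≤ 0 by linarith), zero_add]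
    exact h₂.trans (measure_mono hT₂K)
  rcases le_or_gt S₂ 0 with hs₂ | hs₂
  · rw [ENNReal.ofReal_of_nonpos (show S₂/2 ≤ 0 by linarith), add_zero]
    exact h₁.trans (measure_mono hT₁K)
  -- both triangles have positive signed area: they lie on opposite sides of line v₄v₃
  obtain ⟨a, ha⟩ : ∃ a : ℝ, a = -(v₃.2-v₄.2) := ⟨_, rfl⟩
  obtain ⟨b, hb⟩ : ∃ b : ℝ, b = v₃.1-v₄.1 := ⟨_, rfl⟩
  obtain ⟨c, hc⟩ : ∃ c : ℝ, c = a*v₄.1 + b*v₄.2 := ⟨_, rfl⟩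
  have hlin : IsLinearMap ℝ (fun z : ℝ × ℝ => a*z.1 + b*z.2) :=
    ⟨fun x y => by simp only [Prod.fst_add, Prod.snd_add]; ring,
     fun t x => by simp only [Prod.smul_fst, Prod.smul_snd, smul_eq_mul]; ring⟩
  have hg₁ : a*v₁.1 + b*v₁.2 = c + S₁ := by rw [hc, ha, hb, hS₁]; ring
  have hg₂ : a*v₂.1 + b*v₂.2 = c - S₂ := by rw [hc, ha, hb, hS₂]; ring
  have hg₃ : a*v₃.1 + b*v₃.2 = c := by rw [hc, ha, hb]; ring
  have hT₁ : convexHull ℝ {v₄, v₃, v₁} ⊆ {z : ℝ × ℝ | c ≤ a*z.1 + b*z.2} := by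
    apply convexHull_min _ (convex_halfSpace_ge hlin c)
    intro z hz
    simp only [mem_insert_iff, mem_singleton_iff] at hz
    rcases hz with rfl | rfl | rfl <;> simp only [mem_setOf_eq] <;> linarith
  have hT₂ : convexHull ℝ {v₄, v₂, v₃} ⊆ {z : ℝ × ℝ | a*z.1 + b*z.2 ≤ c} := by
    apply convexHull_min _ (convex_halfSpace_le hlin c)
    intro z hz
    simp only [mem_insert_iff, mem_singleton_iff] at hz
    rcases hz with rfl | rfl | rfl <;> simp only [mem_setOf_eq] <;> linarith
  have hinter : volume (convexHull ℝ {v₄, v₃, v₁} ∩ convexHull ℝ {v₄, v₂, v₃}) = 0 := by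
    have hsub : convexHull ℝ {v₄, v₃, v₁} ∩ convexHull ℝ {v₄, v₂, v₃}
        ⊆ {p : ℝ × ℝ | a * p.1 + b * p.2 = c} := by
      rintro z ⟨hz₁, hz₂⟩
      exact le_antisymm (hT₂ hz₂) (hT₁ hz₁)
    refine measure_mono_null hsub (line_null a b c ?_)
    rintro ⟨ha0, hb0⟩
    have e₂ : v₃.2 - v₄.2 = 0 := by rw [ha0] at ha; linarith
    have e₁ : v₃.1 - v₄.1 = 0 := by rw [hb0] at hb; linarith
    rw [hS₁, e₁, e₂] at hs₁
    simp at hs₁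
  have hmeas : MeasurableSet (convexHull ℝ {v₄, v₂, v₃}) :=
    ((Set.toFinite _).isCompact_convexHull (𝕜 := ℝ)).isClosed.measurableSet
  calc ENNReal.ofReal (S₁/2) + ENNReal.ofReal (S₂/2)
      ≤ volume (convexHull ℝ {v₄, v₃, v₁}) + volume (convexHull ℝ {v₄, v₂, v₃}) :=
        add_le_add h₁ h₂
    _ = volume (convexHull ℝ {v₄, v₃, v₁} ∪ convexHull ℝ {v₄, v₂, v₃})
          + volume (convexHull ℝ {v₄, v₃, v₁} ∩ convexHull ℝ {v₄, v₂, v₃}) :=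
        (measure_union_add_inter _ hmeas).symm
    _ = volume (convexHull ℝ {v₄, v₃, v₁} ∪ convexHull ℝ {v₄, v₂, v₃}) := by
        rw [hinter, add_zero]
    _ ≤ volume K := measure_mono (union_subset hT₁K hT₂K)

end Aux

open MeasureTheory Set in
private lemma sup_sub_inf_bound (K : Set (ℝ×ℝ)) (v₁ v₂ v₃ v₄ : ℝ×ℝ)
    (hKq : K = convexHull ℝ {v₁, v₂, v₃, v₄}) (hne : K.Nonempty)
    (f : ℝ×ℝ → ℝ) (hf : IsLinearMap ℝ f) :
    sSup (f '' K) - sInf (f '' K)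
      ≤ max (max (f v₁) (f v₂)) (max (f v₃) (f v₄))
        - min (min (f v₁) (f v₂)) (min (f v₃) (f v₄)) := by
  have h1 : ∀ z ∈ K, f z ≤ max (max (f v₁) (f v₂)) (max (f v₃) (f v₄)) := by
    rw [hKq]
    intro z hz
    refine convexHull_min ?_ (convex_halfSpace_le hf _) hz
    intro w hw
    simp only [mem_insert_iff, mem_singleton_iff] at hw
    rcases hw with rfl|rfl|rfl|rfl
    · exact mem_setOf_eq ▸ (le_max_left _ _).trans (le_max_left _ _)
    · exact mem_setOf_eq ▸ (le_max_right _ _).trans (le_max_left _ _)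
    · exact mem_setOf_eq ▸ (le_max_left _ _).trans (le_max_right _ _)
    · exact mem_setOf_eq ▸ (le_max_right _ _).trans (le_max_right _ _)
  have h2 : ∀ z ∈ K, min (min (f v₁) (f v₂)) (min (f v₃) (f v₄)) ≤ f z := by
    rw [hKq]
    intro z hz
    refine convexHull_min ?_ (convex_halfSpace_ge hf _) hz
    intro w hw
    simp only [mem_insert_iff, mem_singleton_iff] at hw
    rcases hw with rfl|rfl|rfl|rfl
    · exact mem_setOf_eq ▸ (min_le_left _ _).trans (min_le_left _ _)
    · exact mem_setOf_eq ▸ (min_le_left _ _).trans (min_le_right _ _)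
    · exact mem_setOf_eq ▸ (min_le_right _ _).trans (min_le_left _ _)
    · exact mem_setOf_eq ▸ (min_le_right _ _).trans (min_le_right _ _)
  have hs : sSup (f '' K) ≤ max (max (f v₁) (f v₂)) (max (f v₃) (f v₄)) :=
    csSup_le (hne.image f) (by rintro _ ⟨z, hz, rfl⟩; exact h1 z hz)
  have hi : min (min (f v₁) (f v₂)) (min (f v₃) (f v₄)) ≤ sInf (f '' K) :=
    le_csInf (hne.image f) (by rintro _ ⟨z, hz, rfl⟩; exact h2 z hz)
  linarith

private lemma final_arith (t S₁ S₂ s q q' : ℝ) (hreal : (S₁+S₂)/2 ≤ t)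
    (hsum : S₁+S₂ = q*q' - s) (hkey : s ≤ q^2/4) (hqq' : q*q ≤ q*q') :
    2 * t ≥ 3/4 * q^2 := by nlinarith [hreal, hsum, hkey, hqq']

set_option maxHeartbeats 1000000 in

/-- Let `K` be a lattice polygon whose lattice width `q` is attained in the vertical
direction, with horizontal width `q' ≥ q`, satisfying `d(K,(1,1)) ≥ q'` and
`d(K,(1,-1)) ≥ q'`.  If `K` is a quadrilateral whose four vertices lie on the four
supporting lines in the directions `(0,±1)` and `(±1,0)`, then `2·Area(K) ≥ (3/4)q²`. -/
theorem stmt_5 (K : Set (ℝ × ℝ)) (V : Finset (ℤ × ℤ))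
    (hK : K = convexHull ℝ ((fun p : ℤ × ℤ => ((p.1 : ℝ), (p.2 : ℝ))) '' ↑V))
    (hne : K.Nonempty)
    (q q' : ℝ)
    (hq : dirWidth K (0, 1) = q)
    (hqmin : ∀ v : ℤ × ℤ, IsPrimitiveVec v → q ≤ dirWidth K v)
    (hq' : dirWidth K (1, 0) = q')
    (hq'q : q ≤ q')
    (h11 : dirWidth K (1, 1) ≥ q')
    (h1m1 : dirWidth K (1, -1) ≥ q')
    (hquad : ∃ v₁ v₂ v₃ v₄ : ℝ × ℝ,
      K = convexHull ℝ {v₁, v₂, v₃, v₄} ∧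
      v₁.2 = sSup (Prod.snd '' K) ∧
      v₂.2 = sInf (Prod.snd '' K) ∧
      v₃.1 = sSup (Prod.fst '' K) ∧
      v₄.1 = sInf (Prod.fst '' K)) :
    2 * (volume K).toReal ≥ 3 / 4 * q ^ 2 := by
  classical
  obtain ⟨v₁, v₂, v₃, v₄, hKq, hv₁, hv₂, hv₃, hv₄⟩ := hquad
  -- compactness
  have hKcomp : IsCompact K := by
    rw [hK]; exact (V.finite_toSet.image _).isCompact_convexHull (𝕜 := ℝ)
  -- memberships
  have hmem : ∀ w ∈ ({v₁, v₂, v₃, v₄} : Set (ℝ×ℝ)), w ∈ K := by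
    intro w hw; rw [hKq]; exact subset_convexHull ℝ _ hw
  have hm₁ : v₁ ∈ K := hmem v₁ (by simp)
  have hm₂ : v₂ ∈ K := hmem v₂ (by simp)
  have hm₃ : v₃ ∈ K := hmem v₃ (by simp)
  have hm₄ : v₄ ∈ K := hmem v₄ (by simp)
  -- coordinate bounds
  have hbddf : BddAbove (Prod.fst '' K) := (hKcomp.image continuous_fst).bddAbove
  have hbddf' : BddBelow (Prod.fst '' K) := (hKcomp.image continuous_fst).bddBelow
  have hbdds : BddAbove (Prod.snd '' K) := (hKcomp.image continuous_snd).bddAbove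
  have hbdds' : BddBelow (Prod.snd '' K) := (hKcomp.image continuous_snd).bddBelow
  have hub1 : ∀ z ∈ K, z.1 ≤ v₃.1 := by
    intro z hz; rw [hv₃]; exact le_csSup hbddf ⟨z, hz, rfl⟩
  have hlb1 : ∀ z ∈ K, v₄.1 ≤ z.1 := by
    intro z hz; rw [hv₄]; exact csInf_le hbddf' ⟨z, hz, rfl⟩
  have hub2 : ∀ z ∈ K, z.2 ≤ v₁.2 := by
    intro z hz; rw [hv₁]; exact le_csSup hbdds ⟨z, hz, rfl⟩
  have hlb2 : ∀ z ∈ K, v₂.2 ≤ z.2 := by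
    intro z hz; rw [hv₂]; exact csInf_le hbdds' ⟨z, hz, rfl⟩
  -- identify q and q'
  have hqeq : q = v₁.2 - v₂.2 := by
    rw [← hq, hv₁, hv₂]
    have : (fun p : ℝ×ℝ => (((0:ℤ):ℝ)) * p.1 + (((1:ℤ):ℝ)) * p.2) '' K = Prod.snd '' K :=
      Set.image_congr (fun p _ => by push_cast; ring)
    show sSup ((fun p : ℝ×ℝ => (((0:ℤ):ℝ)) * p.1 + (((1:ℤ):ℝ)) * p.2) '' K)
        - sInf ((fun p : ℝ×ℝ => (((0:ℤ):ℝ)) * p.1 + (((1:ℤ):ℝ)) * p.2) '' K) = _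
    rw [this]
  have hq'eq : q' = v₃.1 - v₄.1 := by
    rw [← hq', hv₃, hv₄]
    have : (fun p : ℝ×ℝ => (((1:ℤ):ℝ)) * p.1 + (((0:ℤ):ℝ)) * p.2) '' K = Prod.fst '' K :=
      Set.image_congr (fun p _ => by push_cast; ring)
    show sSup ((fun p : ℝ×ℝ => (((1:ℤ):ℝ)) * p.1 + (((0:ℤ):ℝ)) * p.2) '' K)
        - sInf ((fun p : ℝ×ℝ => (((1:ℤ):ℝ)) * p.1 + (((0:ℤ):ℝ)) * p.2) '' K) = _
    rw [this]
  -- the two diagonal functionals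
  have hplus : dirWidth K (1, 1)
      = sSup ((fun p : ℝ×ℝ => p.1 + p.2) '' K) - sInf ((fun p : ℝ×ℝ => p.1 + p.2) '' K) := by
    have : (fun p : ℝ×ℝ => (((1:ℤ):ℝ)) * p.1 + (((1:ℤ):ℝ)) * p.2) '' K
        = (fun p : ℝ×ℝ => p.1 + p.2) '' K :=
      Set.image_congr (fun p _ => by push_cast; ring)
    show sSup ((fun p : ℝ×ℝ => (((1:ℤ):ℝ)) * p.1 + (((1:ℤ):ℝ)) * p.2) '' K)
        - sInf ((fun p : ℝ×ℝ => (((1:ℤ):ℝ)) * p.1 + (((1:ℤ):ℝ)) * p.2) '' K) = _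
    rw [this]
  have hminus : dirWidth K (1, -1)
      = sSup ((fun p : ℝ×ℝ => p.1 - p.2) '' K) - sInf ((fun p : ℝ×ℝ => p.1 - p.2) '' K) := by
    have : (fun p : ℝ×ℝ => (((1:ℤ):ℝ)) * p.1 + (((-1:ℤ):ℝ)) * p.2) '' K
        = (fun p : ℝ×ℝ => p.1 - p.2) '' K :=
      Set.image_congr (fun p _ => by push_cast; ring)
    show sSup ((fun p : ℝ×ℝ => (((1:ℤ):ℝ)) * p.1 + (((-1:ℤ):ℝ)) * p.2) '' K)
        - sInf ((fun p : ℝ×ℝ => (((1:ℤ):ℝ)) * p.1 + (((-1:ℤ):ℝ)) * p.2) '' K) = _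
    rw [this]
  have hfplus : IsLinearMap ℝ (fun p : ℝ×ℝ => p.1 + p.2) :=
    ⟨fun x y => by simp only [Prod.fst_add, Prod.snd_add]; ring,
     fun t x => by simp only [Prod.smul_fst, Prod.smul_snd, smul_eq_mul]; ring⟩
  have hfminus : IsLinearMap ℝ (fun p : ℝ×ℝ => p.1 - p.2) :=
    ⟨fun x y => by simp only [Prod.fst_add, Prod.snd_add]; ring,
     fun t x => by simp only [Prod.smul_fst, Prod.smul_snd, smul_eq_mul]; ring⟩
  have hbp := sup_sub_inf_bound K v₁ v₂ v₃ v₄ hKq hne _ hfplus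
  have hbm := sup_sub_inf_bound K v₁ v₂ v₃ v₄ hKq hne _ hfminus
  rw [hplus] at h11
  rw [hminus] at h1m1
  -- abbreviations
  set A : ℝ := v₁.1 - v₄.1 with hA
  set B : ℝ := v₂.1 - v₄.1 with hB
  set C : ℝ := v₃.2 - v₂.2 with hC
  set D : ℝ := v₄.2 - v₂.2 with hD
  have hA0 : 0 ≤ A := by have := hlb1 v₁ hm₁; simp [hA]; linarith
  have hAq : A ≤ q' := by have := hub1 v₁ hm₁; rw [hq'eq]; simp [hA]; linarith
  have hB0 : 0 ≤ B := by have := hlb1 v₂ hm₂; simp [hB]; linarith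
  have hBq : B ≤ q' := by have := hub1 v₂ hm₂; rw [hq'eq]; simp [hB]; linarith
  have hC0 : 0 ≤ C := by have := hlb2 v₃ hm₃; simp [hC]; linarith
  have hCq : C ≤ q := by have := hub2 v₃ hm₃; rw [hqeq]; simp [hC]; linarith
  have hD0 : 0 ≤ D := by have := hlb2 v₄ hm₄; simp [hD]; linarith
  have hDq : D ≤ q := by have := hub2 v₄ hm₄; rw [hqeq]; simp [hD]; linarith
  -- rewrite the diagonal width bounds in terms of A B C D
  have e₁p : v₁.1 + v₁.2 = (A + q) + (v₄.1 + v₂.2) := by rw [hA, hqeq]; ring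
  have e₂p : v₂.1 + v₂.2 = B + (v₄.1 + v₂.2) := by rw [hB]; ring
  have e₃p : v₃.1 + v₃.2 = (q' + C) + (v₄.1 + v₂.2) := by rw [hC, hq'eq]; ring
  have e₄p : v₄.1 + v₄.2 = D + (v₄.1 + v₂.2) := by rw [hD]; ring
  have e₁m : v₁.1 - v₁.2 = (A - q) + (v₄.1 - v₂.2) := by rw [hA, hqeq]; ring
  have e₂m : v₂.1 - v₂.2 = B + (v₄.1 - v₂.2) := by rw [hB]; ring
  have e₃m : v₃.1 - v₃.2 = (q' - C) + (v₄.1 - v₂.2) := by rw [hC, hq'eq]; ring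
  have e₄m : v₄.1 - v₄.2 = (-D) + (v₄.1 - v₂.2) := by rw [hD]; ring
  have h1 : q' ≤ max (max (A+q) B) (max (q'+C) D) - min (min (A+q) B) (min (q'+C) D) := by
    have hx : q' ≤ _ := le_trans h11 hbp
    simp only [e₁p, e₂p, e₃p, e₄p, max_add_add_right, min_add_add_right] at hx
    linarith
  have h2 : q' ≤ max (max (A-q) B) (max (q'-C) (-D)) - min (min (A-q) B) (min (q'-C) (-D)) := by
    have hx : q' ≤ _ := le_trans h1m1 hbm
    simp only [e₁m, e₂m, e₃m, e₄m, max_add_add_right, min_add_add_right] at hx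
    linarith
  have hkey := key_arith q q' A B C D hA0 hAq hB0 hBq hC0 hCq hD0 hDq hq'q h1 h2
  have hq0 : 0 ≤ q := le_trans hC0 hCq
  -- volume lower bound
  have hquadvol := quad_vol v₁ v₂ v₃ v₄
  rw [← hKq] at hquadvol
  set S₁ : ℝ := (v₃.1-v₄.1)*(v₁.2-v₄.2) - (v₁.1-v₄.1)*(v₃.2-v₄.2) with hS₁
  set S₂ : ℝ := (v₂.1-v₄.1)*(v₃.2-v₄.2) - (v₃.1-v₄.1)*(v₂.2-v₄.2) with hS₂
  have hsum : S₁ + S₂ = q * q' - (B - A) * (D - C) := by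
    rw [hS₁, hS₂, hqeq, hq'eq, hA, hB, hC, hD]; ring
  have hle : ENNReal.ofReal ((S₁ + S₂)/2) ≤ volume K := by
    calc ENNReal.ofReal ((S₁ + S₂)/2) = ENNReal.ofReal (S₁/2 + S₂/2) := by ring_nf
      _ ≤ ENNReal.ofReal (S₁/2) + ENNReal.ofReal (S₂/2) := ENNReal.ofReal_add_le
      _ ≤ volume K := hquadvol
  have hfin : volume K ≠ ⊤ := hKcomp.measure_lt_top.ne
  have hreal : (S₁ + S₂)/2 ≤ (volume K).toReal :=
    (ENNReal.ofReal_le_iff_le_toReal hfin).1 hle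
  have hqq' : q * q ≤ q * q' := mul_le_mul_of_nonneg_left hq'q hq0
  exact final_arith (volume K).toReal S₁ S₂ ((B - A) * (D - C)) q q' hreal hsum hkey hqq'
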